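/- Let D be a probability distribution on ℝᵈ, let η ~ D, let v ∈ ℝᵈ be nonzero, and let δ = tv(D, D + v) with δ > 0. Then E[|⟨v, η⟩|²]/‖v‖₂² ≥ (‖v‖₂²/200)·(1−δ)/δ². -/

import Mathlib

open MeasureTheory

/-- Total variation distance between two measures. -/
noncomputable def tv {α : Type*} [MeasurableSpace α] (P Q : Measure α) : ℝ :=
  ⨆ A : {s : Set α // MeasurableSet s}, |(P A.1).toReal - (Q A.1).toReal|

theorem stmt5 {d : ℕ} (D : Measure (EuclideanSpace ℝ (Fin d))) [IsProbabilityMeasure D]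
    (v : EuclideanSpace ℝ (Fin d)) (hv : v ≠ 0) (δ : ℝ)
    (hδ : δ = tv D (D.map (· + v))) (hpos : 0 < δ) :
    ENNReal.ofReal (‖v‖ ^ 2 / 200 * ((1 - δ) / δ ^ 2)) ≤
      (∫⁻ η, ENNReal.ofReal (|(inner ℝ v η : ℝ)| ^ 2) ∂D) / ENNReal.ofReal (‖v‖ ^ 2) := by
  classical
  set ε : ℝ := ‖v‖ ^ 2 with hεdef
  have hvn : ‖v‖ ≠ 0 := norm_ne_zero_iff.mpr hv
  have hε : 0 < ε := by rw [hεdef]; positivity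
  have hmv : Measurable (fun x : EuclideanSpace ℝ (Fin d) => x + v) := measurable_add_const v
  haveI : IsProbabilityMeasure (D.map (· + v)) := Measure.isProbabilityMeasure_map hmv.aemeasurable
  -- one-step tv bound
  have htv : ∀ A : Set (EuclideanSpace ℝ (Fin d)), MeasurableSet A →
      |(D A).toReal - (D ((fun x => x + v) ⁻¹' A)).toReal| ≤ δ := by
    intro A hA
    have hmap : (D.map (· + v)) A = D ((fun x => x + v) ⁻¹' A) := Measure.map_apply hmv hA
    rw [hδ, tv, ← hmap]
    refine le_ciSup_of_le ?_ (⟨A, hA⟩ : {s : Set (EuclideanSpace ℝ (Fin d)) // MeasurableSet s}) le_rfl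
    refine ⟨2, ?_⟩
    rintro x ⟨B, rfl⟩
    have h1 : (D B.1).toReal ≤ 1 := by
      simpa using ENNReal.toReal_mono ENNReal.one_ne_top (prob_le_one (μ := D) (s := B.1))
    have h2 : ((D.map (· + v)) B.1).toReal ≤ 1 := by
      simpa using ENNReal.toReal_mono ENNReal.one_ne_top
        (prob_le_one (μ := D.map (· + v)) (s := B.1))
    have h3 : 0 ≤ (D B.1).toReal := ENNReal.toReal_nonneg
    have h4 : 0 ≤ ((D.map (· + v)) B.1).toReal := ENNReal.toReal_nonneg
    rw [abs_sub_le_iff]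
    constructor <;> linarith
  -- iterated tv bound
  have hiter : ∀ k : ℕ, ∀ A : Set (EuclideanSpace ℝ (Fin d)), MeasurableSet A →
      |(D A).toReal - (D ((fun x => x + (k : ℝ) • v) ⁻¹' A)).toReal| ≤ k * δ := by
    intro k
    induction k with
    | zero =>
      intro A hA
      simp
    | succ n ih =>
      intro A hA
      have hB : MeasurableSet ((fun x : EuclideanSpace ℝ (Fin d) => x + v) ⁻¹' A) := hA.preimage hmv
      have h1 := htv A hA
      have h2 := ih _ hB
      have hset : (fun x : EuclideanSpace ℝ (Fin d) => x + (n : ℝ) • v) ⁻¹' ((fun x : EuclideanSpace ℝ (Fin d) => x + v) ⁻¹' A)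
          = (fun x : EuclideanSpace ℝ (Fin d) => x + ((n + 1 : ℕ) : ℝ) • v) ⁻¹' A := by
        ext x
        simp only [Set.mem_preimage]
        push_cast
        rw [add_smul, one_smul, ← add_assoc]
      rw [hset] at h2
      have := abs_sub_le (D A).toReal (D ((fun x : EuclideanSpace ℝ (Fin d) => x + v) ⁻¹' A)).toReal
        (D ((fun x : EuclideanSpace ℝ (Fin d) => x + ((n + 1 : ℕ) : ℝ) • v) ⁻¹' A)).toReal
      push_cast at this h2 ⊢
      linarith
  have hZm : Measurable fun x : EuclideanSpace ℝ (Fin d) => (inner ℝ v x : ℝ) :=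
    (Continuous.inner continuous_const continuous_id).measurable
  have hZadd : ∀ (x : EuclideanSpace ℝ (Fin d)) (t : ℝ), (inner ℝ v (x + t • v) : ℝ) = (inner ℝ v x : ℝ) + t * ε := by
    intro x t
    rw [inner_add_right, real_inner_smul_right, real_inner_self_eq_norm_sq]
  -- key anticoncentration bound
  have key : ∀ k : ℕ, 1 ≤ k →
      ENNReal.ofReal (((k : ℝ) * ε / 2) ^ 2 * ((1 - (k : ℝ) * δ) / 2)) ≤
        ∫⁻ η, ENNReal.ofReal (|(inner ℝ v η : ℝ)| ^ 2) ∂D := by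
    intro k hk1
    have hkR : (1 : ℝ) ≤ (k : ℝ) := by exact_mod_cast hk1
    set c : ℝ := (k : ℝ) * ε / 2 with hc
    have hcpos : 0 < c := by rw [hc]; nlinarith
    set A : Set (EuclideanSpace ℝ (Fin d)) := {x | |(inner ℝ v x : ℝ)| < c} with hAdef
    have hA : MeasurableSet A := measurableSet_lt hZm.abs measurable_const
    set B : Set (EuclideanSpace ℝ (Fin d)) := (fun x : EuclideanSpace ℝ (Fin d) => x + (k : ℝ) • v) ⁻¹' A with hBdef
    have hBm : MeasurableSet B := hA.preimage (measurable_add_const _)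
    have hABdisj : Disjoint A B := by
      rw [Set.disjoint_left]
      intro x hxA hxB
      have h1 : |(inner ℝ v x : ℝ)| < c := hxA
      have h2 : |(inner ℝ v x : ℝ) + (k : ℝ) * ε| < c := by
        have hx : x + (k : ℝ) • v ∈ A := hxB
        have := hx
        rw [hAdef, Set.mem_setOf_eq, hZadd] at this
        exact this
      have hke : (k : ℝ) * ε = 2 * c := by rw [hc]; ring
      rw [abs_lt] at h1 h2
      linarith [h1.1, h1.2, h2.1, h2.2]
    have hsum : D A + D B ≤ 1 := by
      rw [← measure_union hABdisj hBm]
      exact prob_le_one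
    have hsumR : (D A).toReal + (D B).toReal ≤ 1 := by
      rw [← ENNReal.toReal_add (measure_ne_top _ _) (measure_ne_top _ _)]
      simpa using ENNReal.toReal_mono ENNReal.one_ne_top hsum
    have hiterAB := hiter k A hA
    have h3 : (D A).toReal - (D B).toReal ≤ (k : ℝ) * δ := le_of_abs_le hiterAB
    have hcompl : (D Aᶜ).toReal = 1 - (D A).toReal := by
      rw [prob_compl_eq_one_sub hA,
        ENNReal.toReal_sub_of_le prob_le_one ENNReal.one_ne_top, ENNReal.toReal_one]
    have hcomplge : (1 - (k : ℝ) * δ) / 2 ≤ (D Aᶜ).toReal := by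
      rw [hcompl]; linarith
    have hmf : Measurable fun x : EuclideanSpace ℝ (Fin d) => ENNReal.ofReal (|(inner ℝ v x : ℝ)| ^ 2) :=
      ENNReal.measurable_ofReal.comp ((hZm.abs).pow_const 2)
    calc ENNReal.ofReal (c ^ 2 * ((1 - (k : ℝ) * δ) / 2))
        ≤ ENNReal.ofReal (c ^ 2 * (D Aᶜ).toReal) :=
          ENNReal.ofReal_le_ofReal (mul_le_mul_of_nonneg_left hcomplge (by positivity))
      _ = ENNReal.ofReal (c ^ 2) * D Aᶜ := by
          rw [ENNReal.ofReal_mul (by positivity), ENNReal.ofReal_toReal (measure_ne_top _ _)]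
      _ = ∫⁻ _ in Aᶜ, ENNReal.ofReal (c ^ 2) ∂D := by
          rw [setLIntegral_const]
      _ ≤ ∫⁻ x in Aᶜ, ENNReal.ofReal (|(inner ℝ v x : ℝ)| ^ 2) ∂D := by
          refine setLIntegral_mono hmf ?_
          intro x hx
          have hxc : c ≤ |(inner ℝ v x : ℝ)| := not_lt.mp hx
          exact ENNReal.ofReal_le_ofReal (by nlinarith [abs_nonneg (inner ℝ v x : ℝ)])
      _ ≤ ∫⁻ x, ENNReal.ofReal (|(inner ℝ v x : ℝ)| ^ 2) ∂D := setLIntegral_le_lintegral _ _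
  -- finish
  rcases le_or_gt 1 δ with h1 | h1
  · have hle : ε / 200 * ((1 - δ) / δ ^ 2) ≤ 0 := by
      have h2 : (1 - δ) / δ ^ 2 ≤ 0 :=
        div_nonpos_of_nonpos_of_nonneg (by linarith) (by positivity)
      exact mul_nonpos_iff.mpr (Or.inl ⟨by positivity, h2⟩)
    rw [ENNReal.ofReal_eq_zero.mpr hle]
    exact zero_le
  · have hδne : δ ≠ 0 := ne_of_gt hpos
    have ha : 0 ≤ ε / 200 * ((1 - δ) / δ ^ 2) := by
      apply mul_nonneg (by positivity)
      exact div_nonneg (by linarith) (by positivity)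
    rw [ENNReal.le_div_iff_mul_le (Or.inl (ENNReal.ofReal_pos.mpr hε).ne')
      (Or.inl ENNReal.ofReal_ne_top), ← ENNReal.ofReal_mul ha]
    rcases le_or_gt (1 / 5 : ℝ) δ with h5 | h5
    · refine le_trans (ENNReal.ofReal_le_ofReal ?_) (key 1 le_rfl)
      push_cast
      have hδ2 : (0:ℝ) < δ ^ 2 := by positivity
      have hkey : (1 - δ) / δ ^ 2 ≤ (1 - δ) * 25 := by
        rw [div_le_iff₀ hδ2]
        nlinarith [mul_nonneg (by linarith : (0:ℝ) ≤ 1 - δ)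
          (by nlinarith : (0:ℝ) ≤ 25 * δ ^ 2 - 1)]
      calc ε / 200 * ((1 - δ) / δ ^ 2) * ε ≤ ε / 200 * ((1 - δ) * 25) * ε :=
            mul_le_mul_of_nonneg_right
              (mul_le_mul_of_nonneg_left hkey (by positivity)) hε.le
        _ = (1 * ε / 2) ^ 2 * ((1 - 1 * δ) / 2) := by ring
    · set k : ℕ := ⌊1 / (2 * δ)⌋₊ with hkdef
      have hx52 : (5 / 2 : ℝ) ≤ 1 / (2 * δ) := by
        rw [le_div_iff₀ (by linarith)]
        linarith
      have hk2 : 2 ≤ k := by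
        rw [hkdef]
        exact Nat.le_floor (by linarith)
      have hk1 : 1 ≤ k := le_trans (by norm_num) hk2
      have hkub : (k : ℝ) ≤ 1 / (2 * δ) := Nat.floor_le (by positivity)
      have hklb : 1 / (2 * δ) - 1 < (k : ℝ) := by
        have := Nat.sub_one_lt_floor (1 / (2 * δ))
        exact_mod_cast this
      have hKδhi : (k : ℝ) * δ ≤ 1 / 2 := by
        have := mul_le_mul_of_nonneg_right hkub (le_of_lt hpos)
        rw [div_mul_eq_mul_div, one_mul] at this
        calc (k:ℝ) * δ ≤ δ / (2 * δ) := this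
          _ = 1 / 2 := by
            rw [mul_comm]
            field_simp
      have hKδlow : 3 / 10 < (k : ℝ) * δ := by
        have h' := mul_lt_mul_of_pos_right hklb hpos
        have he : (1 / (2 * δ) - 1) * δ = 1 / 2 - δ := by field_simp
        rw [he] at h'
        linarith
      refine le_trans (ENNReal.ofReal_le_ofReal ?_) (key k hk1)
      set s : ℝ := (k : ℝ) * δ with hsdef
      have hcube : 9 / 200 < s ^ 2 * (1 - s) := by nlinarith [sq_nonneg (s - 3/10)]
      have hrhs : ((k : ℝ) * ε / 2) ^ 2 * ((1 - (k : ℝ) * δ) / 2)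
          = ε ^ 2 / δ ^ 2 * (s ^ 2 * (1 - s)) / 8 := by
        rw [hsdef]; field_simp; ring
      rw [hrhs]
      have hlhs : ε / 200 * ((1 - δ) / δ ^ 2) * ε = ε ^ 2 / δ ^ 2 * (1 - δ) / 200 := by
        field_simp
      rw [hlhs]
      have hq : (0:ℝ) ≤ ε ^ 2 / δ ^ 2 := by positivity
      calc ε ^ 2 / δ ^ 2 * (1 - δ) / 200 = ε ^ 2 / δ ^ 2 * ((1 - δ) / 200) := by ring
        _ ≤ ε ^ 2 / δ ^ 2 * (s ^ 2 * (1 - s) / 8) :=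
            mul_le_mul_of_nonneg_left (by linarith) hq
        _ = ε ^ 2 / δ ^ 2 * (s ^ 2 * (1 - s)) / 8 := by ring
  done
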